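/- Let w be a nonzero affine relation for q. Then the volume of the convex hull of the whole configuration is simultaneously decomposed by the simplices omitting the positively-weighted points and by those omitting the negatively-weighted points: Σ_{i : w(i) > 0} vol( conv( q(Fin (n+2) ∖ {i}) ) ) = vol( conv( q(Fin (n+2)) ) ) = Σ_{i : w(i) < 0} vol( conv( q(Fin (n+2) ∖ {i}) ) ), where vol denotes n-dimensional Lebesgue measure in ℝⁿ. -/

import Mathlib

open MeasureTheory

/-- `w` is an affine relation for `q`: `Σ_i w i = 0` and `Σ_i w i • q i = 0`. -/
def IsAffineRelation (n : ℕ) (q : Fin (n + 2) → (Fin n → ℝ))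
    (w : Fin (n + 2) → ℝ) : Prop :=
  (∑ i, w i) = 0 ∧ (∑ i, w i • q i) = 0

-- A: weight extraction
lemma exists_weights {n m : ℕ} (q : Fin m → (Fin n → ℝ)) (S : Set (Fin m)) {x : Fin n → ℝ}
    (hx : x ∈ convexHull ℝ (q '' S)) :
    ∃ lam : Fin m → ℝ, (∀ k, 0 ≤ lam k) ∧ (∀ k, k ∉ S → lam k = 0) ∧
      (∑ k, lam k) = 1 ∧ (∑ k, lam k • q k) = x := by
  classical
  have himg : q '' S = Set.range (fun i : S => q i) := Set.image_eq_range _ _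
  rw [himg, convexHull_range_eq_exists_affineCombination] at hx
  obtain ⟨s, w, hw0, hw1, hwx⟩ := hx
  rw [Finset.affineCombination_eq_linear_combination _ _ _ hw1] at hwx
  refine ⟨fun k => ∑ j ∈ s, if (j : Fin m) = k then w j else 0, ?_, ?_, ?_, ?_⟩
  · intro k
    refine Finset.sum_nonneg fun j hj => ?_
    by_cases h : (j : Fin m) = k <;> simp [h, hw0 j hj]
  · intro k hk
    refine Finset.sum_eq_zero fun j hj => ?_
    have : (j : Fin m) ≠ k := fun h => hk (h ▸ j.2)
    simp [this]
  · rw [Finset.sum_comm]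
    rw [← hw1]
    refine Finset.sum_congr rfl fun j hj => ?_
    simp [Finset.sum_ite_eq]
  · rw [← hwx]
    have : ∀ k, (∑ j ∈ s, if (j : Fin m) = k then w j else 0) • q k
        = ∑ j ∈ s, if (j : Fin m) = k then w j • q k else 0 := by
      intro k
      rw [Finset.sum_smul]
      exact Finset.sum_congr rfl fun j hj => by split <;> simp
    simp_rw [this]
    rw [Finset.sum_comm]
    refine Finset.sum_congr rfl fun j hj => ?_
    simp [Finset.sum_ite_eq]

lemma sum_mem_convexHull_image {n m : ℕ} (q : Fin m → (Fin n → ℝ)) (S : Set (Fin m))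
    (lam : Fin m → ℝ) (h0 : ∀ k, 0 ≤ lam k) (hS : ∀ k, k ∉ S → lam k = 0)
    (h1 : (∑ k, lam k) = 1) :
    (∑ k, lam k • q k) ∈ convexHull ℝ (q '' S) := by
  classical
  set t : Finset (Fin m) := Finset.univ.filter (fun k => k ∈ S) with ht
  have hsub : ∀ f : Fin m → (Fin n → ℝ), (∑ k ∈ t, (fun k => lam k • f k) k) = ∑ k, lam k • f k := by
    intro f
    refine Finset.sum_subset (Finset.subset_univ _) fun x _ hx => ?_
    have : x ∉ S := by simpa [ht] using hx
    simp [hS x this]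
  have hsum : (∑ k ∈ t, lam k) = 1 := by
    rw [← h1]
    refine Finset.sum_subset (Finset.subset_univ _) fun x _ hx => ?_
    have : x ∉ S := by simpa [ht] using hx
    exact hS x this
  have := Finset.centerMass_mem_convexHull (t := t) (w := lam) (z := q)
    (fun i _ => h0 i) (by rw [hsum]; norm_num) (fun i hi => Set.mem_image_of_mem q (by simpa [ht] using hi))
  rwa [Finset.centerMass, hsum, inv_one, one_smul, hsub q] at this

lemma rel_unique {n : ℕ} (q : Fin (n + 2) → (Fin n → ℝ))
    (hq : affineSpan ℝ (Set.range q) = ⊤)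
    (w : Fin (n + 2) → ℝ) (hw1 : (∑ i, w i) = 0) (hw2 : (∑ i, w i • q i) = 0)
    (hw0 : w ≠ 0)
    (v : Fin (n + 2) → ℝ) (hv1 : (∑ i, v i) = 0) (hv2 : (∑ i, v i • q i) = 0) :
    ∃ t : ℝ, v = t • w := by
  classical
  set f : (Fin (n + 2) → ℝ) →ₗ[ℝ] ℝ × (Fin n → ℝ) :=
    { toFun := fun u => (∑ i, u i, ∑ i, u i • q i)
      map_add' := by
        intro a b
        simp [Finset.sum_add_distrib, add_smul, Prod.mk_add_mk]
      map_smul' := by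
        intro c a
        simp [Finset.mul_sum, mul_smul, Finset.smul_sum, Prod.smul_mk, smul_eq_mul,
          Finset.smul_sum] } with hf
  have hsurj : Function.Surjective f := by
    rintro ⟨c, x⟩
    have hvs : vectorSpan ℝ (Set.range q) = ⊤ := by
      rw [← direction_affineSpan, hq]
      exact AffineSubspace.direction_top ℝ _ _
    have h0 : q 0 ∈ Set.range q := ⟨0, rfl⟩
    have hmem : x - c • q 0 ∈ Submodule.span ℝ ((fun p => p -ᵥ q 0) '' Set.range q) := by
      rw [← vectorSpan_eq_span_vsub_set_right ℝ h0, hvs]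
      trivial
    rw [← Set.range_comp] at hmem
    rw [Submodule.mem_span_range_iff_exists_fun] at hmem
    obtain ⟨a, ha⟩ := hmem
    refine ⟨fun i => a i + (if i = 0 then c - ∑ j, a j else 0), ?_⟩
    have hs1 : (∑ i, (a i + (if i = 0 then c - ∑ j, a j else 0))) = c := by
      rw [Finset.sum_add_distrib, Finset.sum_ite_eq' Finset.univ 0]
      simp
    have hs2 : (∑ i, (a i + (if i = 0 then c - ∑ j, a j else 0)) • q i) = x := by
      have ha' : (∑ i, a i • q i) - (∑ j, a j) • q 0 = x - c • q 0 := by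
        rw [← ha, Finset.sum_smul]
        rw [← Finset.sum_sub_distrib]
        refine Finset.sum_congr rfl fun i _ => ?_
        simp [Function.comp, smul_sub]
      have : ∀ i, (a i + (if i = 0 then c - ∑ j, a j else 0)) • q i
          = a i • q i + (if i = 0 then (c - ∑ j, a j) • q i else 0) := by
        intro i
        rw [add_smul]
        congr 1
        split <;> simp
      simp_rw [this]
      rw [Finset.sum_add_distrib, Finset.sum_ite_eq' Finset.univ 0]
      simp only [Finset.mem_univ, if_true]
      linear_combination (norm := module) ha'
    exact Prod.ext hs1 hs2
  have hrank : Module.finrank ℝ (LinearMap.ker f) = 1 := by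
    have h1 := LinearMap.finrank_range_add_finrank_ker f
    rw [LinearMap.range_eq_top.2 hsurj, finrank_top] at h1
    have h2 : Module.finrank ℝ (ℝ × (Fin n → ℝ)) = n + 1 := by
      rw [Module.finrank_prod, Module.finrank_self, Module.finrank_fin_fun]
      omega
    have h3 : Module.finrank ℝ (Fin (n + 2) → ℝ) = n + 2 := by rw [Module.finrank_fin_fun]
    omega
  have hwker : w ∈ LinearMap.ker f := by
    simp only [LinearMap.mem_ker, hf, LinearMap.coe_mk, AddHom.coe_mk]
    exact Prod.ext hw1 hw2
  have hspan : Submodule.span ℝ {w} = LinearMap.ker f := by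
    refine Submodule.eq_of_le_of_finrank_eq ?_ ?_
    · rwa [Submodule.span_singleton_le_iff_mem]
    · rw [finrank_span_singleton hw0, hrank]
  have hvker : v ∈ LinearMap.ker f := by
    simp only [LinearMap.mem_ker, hf, LinearMap.coe_mk, AddHom.coe_mk]
    exact Prod.ext hv1 hv2
  rw [← hspan, Submodule.mem_span_singleton] at hvker
  obtain ⟨t, ht⟩ := hvker
  exact ⟨t, ht.symm⟩

lemma key_decomp {n : ℕ} (q : Fin (n + 2) → (Fin n → ℝ))
    (hq : affineSpan ℝ (Set.range q) = ⊤)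
    (w : Fin (n + 2) → ℝ) (hw1 : (∑ i, w i) = 0) (hw2 : (∑ i, w i • q i) = 0)
    (hw0 : w ≠ 0) :
    volume (convexHull ℝ (Set.range q)) =
      ∑ i ∈ Finset.univ.filter (fun i => 0 < w i),
        volume (convexHull ℝ (q '' {j | j ≠ i})) := by
  classical
  set P := Finset.univ.filter (fun i => 0 < w i) with hP
  have hPne : P.Nonempty := by
    by_contra h
    rw [Finset.not_nonempty_iff_eq_empty, Finset.filter_eq_empty_iff] at h
    push_neg at h
    have hz := (Finset.sum_eq_zero_iff_of_nonpos (fun i _ => h (Finset.mem_univ i))).1 hw1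
    exact hw0 (funext fun i => hz i (Finset.mem_univ i))
  have hcover : convexHull ℝ (Set.range q) =
      ⋃ i ∈ P, convexHull ℝ (q '' {j | j ≠ i}) := by
    apply Set.Subset.antisymm
    · intro x hx
      rw [← Set.image_univ] at hx
      obtain ⟨lam, hlam0, -, hlam1, hlamx⟩ := exists_weights q Set.univ hx
      obtain ⟨i0, hi0P, hi0min⟩ := P.exists_min_image (fun i => lam i / w i) hPne
      have hwi0 : 0 < w i0 := by simpa [hP] using hi0P
      set t := lam i0 / w i0 with htdef
      have ht0 : 0 ≤ t := div_nonneg (hlam0 i0) hwi0.le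
      set mu := fun k => lam k - t * w k with hmu
      have hmu0 : ∀ k, 0 ≤ mu k := by
        intro k
        by_cases hk : 0 < w k
        · have h1 : t ≤ lam k / w k := hi0min k (by simp [hP, hk])
          have h2 := (le_div_iff₀ hk).1 h1
          simp only [hmu]; linarith
        · push_neg at hk
          have h1 : t * w k ≤ 0 := mul_nonpos_of_nonneg_of_nonpos ht0 hk
          have h2 := hlam0 k
          simp only [hmu]; linarith
      have hmui0 : mu i0 = 0 := by
        simp [hmu, htdef, div_mul_cancel₀ _ hwi0.ne']
      have hmu1 : (∑ k, mu k) = 1 := by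
        simp [hmu, Finset.sum_sub_distrib, hlam1, ← Finset.mul_sum, hw1]
      have hmux : (∑ k, mu k • q k) = x := by
        have h : ∀ k, mu k • q k = lam k • q k - t • (w k • q k) := by
          intro k; simp [hmu, sub_smul, mul_smul]
        simp_rw [h]
        rw [Finset.sum_sub_distrib, ← Finset.smul_sum, hw2, smul_zero, sub_zero, hlamx]
      refine Set.mem_biUnion hi0P ?_
      rw [← hmux]
      refine sum_mem_convexHull_image q {j | j ≠ i0} mu hmu0 (fun k hk => ?_) hmu1
      have : k = i0 := by simpa using hk
      rw [this]; exact hmui0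
    · refine Set.iUnion₂_subset fun i _ => convexHull_mono ?_
      rintro y ⟨j, -, rfl⟩; exact ⟨j, rfl⟩
  have hsmall : ∀ i ∈ P, ∀ j ∈ P, i ≠ j →
      volume (convexHull ℝ (q '' {k | k ≠ i}) ∩ convexHull ℝ (q '' {k | k ≠ j})) = 0 := by
    intro i hiP j hjP hij
    have hwi : 0 < w i := by simpa [hP] using hiP
    have hwj : 0 < w j := by simpa [hP] using hjP
    set T : Set (Fin (n + 2)) := {k | k ≠ i ∧ k ≠ j} with hT
    have hsub : convexHull ℝ (q '' {k | k ≠ i}) ∩ convexHull ℝ (q '' {k | k ≠ j})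
        ⊆ convexHull ℝ (q '' T) := by
      rintro x ⟨hxi, hxj⟩
      obtain ⟨lam, hlam0, hlamS, hlam1, hlamx⟩ := exists_weights q {k | k ≠ i} hxi
      obtain ⟨mu, hmu0, hmuS, hmu1, hmux⟩ := exists_weights q {k | k ≠ j} hxj
      have hlami : lam i = 0 := hlamS i (by simp)
      have hmuj : mu j = 0 := hmuS j (by simp)
      obtain ⟨t, htv⟩ := rel_unique q hq w hw1 hw2 hw0 (lam - mu)
        (by simp [Finset.sum_sub_distrib, hlam1, hmu1])
        (by simp [sub_smul, Finset.sum_sub_distrib, hlamx, hmux])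
      have hti : lam i - mu i = t * w i := by
        have := congrFun htv i; simpa using this
      have htj : lam j - mu j = t * w j := by
        have := congrFun htv j; simpa using this
      have ht1 : t ≤ 0 := by
        by_contra h; push_neg at h
        have := mul_pos h hwi
        have := hmu0 i
        rw [hlami] at hti
        linarith
      have ht2 : 0 ≤ t := by
        by_contra h; push_neg at h
        have : t * w j < 0 := mul_neg_of_neg_of_pos h hwj
        have := hlam0 j
        rw [hmuj] at htj
        linarith
      have ht : t = 0 := le_antisymm ht1 ht2
      have hlamj : lam j = 0 := by rw [ht] at htj; rw [hmuj] at htj; linarith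
      rw [← hlamx]
      refine sum_mem_convexHull_image q T lam hlam0 (fun k hk => ?_) hlam1
      simp only [hT, Set.mem_setOf_eq, not_and_or, not_not] at hk
      rcases hk with rfl | rfl
      · exact hlami
      · exact hlamj
    have hTspan : affineSpan ℝ (q '' T) ≠ ⊤ := by
      cases n with
      | zero =>
        have hTempty : q '' T = ∅ := by
          rw [Set.image_eq_empty]
          have : ∀ i j k : Fin 2, i ≠ j → k ≠ i → k ≠ j → False := by decide
          ext k
          simp only [hT, Set.mem_setOf_eq, Set.mem_empty_iff_false, iff_false, not_and_or,
            not_not]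
          by_contra h
          push_neg at h
          exact this i j k hij h.1 h.2
        rw [hTempty]
        intro h
        have h0 : (0 : Fin 0 → ℝ) ∈ affineSpan ℝ (∅ : Set (Fin 0 → ℝ)) := by
          rw [h]; trivial
        rw [AffineSubspace.span_empty] at h0
        exact AffineSubspace.notMem_bot ℝ _ _ h0
      | succ m =>
        intro h
        set s : Finset (Fin (m + 3)) := (Finset.univ.erase i).erase j with hs
        have hcard : s.card = m + 1 := by
          rw [hs, Finset.card_erase_of_mem (Finset.mem_erase.2 ⟨hij.symm, Finset.mem_univ j⟩),
            Finset.card_erase_of_mem (Finset.mem_univ i), Finset.card_univ]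
          simp
        have hcoe : (↑(s.image q) : Set (Fin (m + 1) → ℝ)) = q '' T := by
          rw [Finset.coe_image]
          ext k
          simp [hs, hT, and_comm]
        have hle := finrank_vectorSpan_image_finset_le ℝ q s hcard
        rw [hcoe] at hle
        have hvs : vectorSpan ℝ (q '' T) = ⊤ := by
          rw [← direction_affineSpan, h]
          exact AffineSubspace.direction_top ℝ _ _
        rw [hvs, finrank_top, Module.finrank_fin_fun] at hle
        omega
    refine measure_mono_null (hsub.trans (convexHull_subset_affineSpan _)) ?_
    exact Measure.addHaar_affineSubspace (volume : Measure (Fin n → ℝ)) _ hTspan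
  rw [hcover, measure_biUnion_finset₀ (fun i hi j hj hij => hsmall i hi j hj hij)
    (fun b _ => (convex_convexHull ℝ _).nullMeasurableSet (μ := volume))]


/-- For a nonzero affine relation `w` of a configuration `q` of `n+2` points affinely
spanning `ℝⁿ`, the volume of the convex hull of the whole configuration is
simultaneously decomposed by the simplices omitting the positively-weighted points
and by those omitting the negatively-weighted points. -/
theorem volume_decomposition_by_circuit (n : ℕ) (q : Fin (n + 2) → (Fin n → ℝ))
    (hq : affineSpan ℝ (Set.range q) = ⊤)
    (w : Fin (n + 2) → ℝ) (hw : IsAffineRelation n q w) (hw0 : w ≠ 0) :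
    (∑ i ∈ Finset.univ.filter (fun i => 0 < w i),
        (volume (convexHull ℝ (q '' {j | j ≠ i}))).toReal) =
      (volume (convexHull ℝ (Set.range q))).toReal ∧
    (∑ i ∈ Finset.univ.filter (fun i => w i < 0),
        (volume (convexHull ℝ (q '' {j | j ≠ i}))).toReal) =
      (volume (convexHull ℝ (Set.range q))).toReal := by
  obtain ⟨hw1, hw2⟩ := hw
  have hfin : ∀ i : Fin (n + 2), volume (convexHull ℝ (q '' {j | j ≠ i})) ≠ ⊤ := by
    intro i
    exact (((Set.toFinite {j | j ≠ i}).image q).isCompact_convexHull ℝ).measure_lt_top.ne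
  constructor
  · rw [← ENNReal.toReal_sum (fun i _ => hfin i), ← key_decomp q hq w hw1 hw2 hw0]
  · have hw1' : (∑ i, (-w) i) = 0 := by simp [hw1]
    have hw2' : (∑ i, (-w) i • q i) = 0 := by
      simp only [Pi.neg_apply, neg_smul, Finset.sum_neg_distrib, hw2, neg_zero]
    have hw0' : (-w) ≠ 0 := neg_ne_zero.2 hw0
    have hfilter : Finset.univ.filter (fun i => 0 < (-w) i) =
        Finset.univ.filter (fun i => w i < 0) := by
      ext i; simp [neg_pos]
    rw [← ENNReal.toReal_sum (fun i _ => hfin i), ← hfilter,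
      ← key_decomp q hq (-w) hw1' hw2' hw0']
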